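/- Under the assumptions that the elasticity solution operator S₁ is Lipschitz with constant L_{S₁} = √M C₁ L_ℓ, the diffusion solution operator S₂ is Lipschitz with constant L_{S₂} = max{1/√(2μ),√(2μ)} M^{3/2} C₂² L_𝕄 (‖φ_D‖_{1/2,Γ_D} + ‖g‖_{L²}), and the small-data condition C₁ L_ℓ max{1/√(2μ),√(2μ)} M² C₂² L_𝕄 (‖φ_D‖_{1/2,Γ_D} + ‖g‖_{L²}) < 1 holds, the map A = S₂₂ ∘ S₁ has a unique fixed point in the closed ball W = {w ∈ Q₂ : ‖w‖_{Q₂} ≤ √M C₂(‖φ_D‖_{1/2,Γ_D} + ‖g‖_{L²})}, and equivalently the coupled stress-assisted diffusion problem has a unique weak solution (u, p̃, ζ, φ). -/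
import Mathlib


/-- Theorem 3.7: under the small-data assumption, the fixed-point map
A = S₂₂ ∘ S₁ has a unique fixed point, which lies in the ball W of radius
√M C₂(‖φ_D‖ + ‖g‖); equivalently the coupled problem is uniquely solvable. -/
theorem stmt_9
    {Z : Type*} [NormedAddCommGroup Z] [CompleteSpace Z]
    (A : Z → Z)
    (C₁ C₂ Lℓ L𝕄 M μ φD g : ℝ)
    (hC₁ : 0 < C₁) (hC₂ : 0 < C₂) (hLℓ : 0 ≤ Lℓ) (hL𝕄 : 0 ≤ L𝕄)
    (hM : 1 ≤ M) (hμ : 0 < μ) (hφD : 0 ≤ φD) (hg : 0 ≤ g)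
    -- A is Lipschitz with constant L_{S₂}·L_{S₁}
    (hAlip : ∀ x y : Z, ‖A x - A y‖ ≤
      (max (1 / Real.sqrt (2 * μ)) (Real.sqrt (2 * μ)) * Real.sqrt (M ^ 3) *
          C₂ ^ 2 * L𝕄 * (φD + g)) * (Real.sqrt M * C₁ * Lℓ) * ‖x - y‖)
    -- A(Q₂) ⊆ W : the a priori bound
    (hrange : ∀ x : Z, ‖A x‖ ≤ Real.sqrt M * C₂ * (φD + g))
    -- small-data assumption
    (hsmall : C₁ * Lℓ * max (1 / Real.sqrt (2 * μ)) (Real.sqrt (2 * μ)) *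
        M ^ 2 * C₂ ^ 2 * L𝕄 * (φD + g) < 1) :
    (∃! φ : Z, A φ = φ) ∧
      ∀ φ : Z, A φ = φ → ‖φ‖ ≤ Real.sqrt M * C₂ * (φD + g) := by

  set k : ℝ := (max (1 / Real.sqrt (2 * μ)) (Real.sqrt (2 * μ)) * Real.sqrt (M ^ 3) *
      C₂ ^ 2 * L𝕄 * (φD + g)) * (Real.sqrt M * C₁ * Lℓ) with hk
  have hmax : 0 < max (1 / Real.sqrt (2 * μ)) (Real.sqrt (2 * μ)) :=
    lt_max_of_lt_right (Real.sqrt_pos.2 (by linarith))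
  have hMpos : (0:ℝ) < M := by linarith
  have hk0 : 0 ≤ k := by positivity
  have hMM : Real.sqrt (M ^ 3) * Real.sqrt M = M ^ 2 := by
    rw [← Real.sqrt_mul (by positivity)]
    have h4 : M ^ 3 * M = (M ^ 2) ^ 2 := by ring
    rw [h4, Real.sqrt_sq (by positivity)]
  have hk1 : k < 1 := by
    have : k = C₁ * Lℓ * max (1 / Real.sqrt (2 * μ)) (Real.sqrt (2 * μ)) *
        M ^ 2 * C₂ ^ 2 * L𝕄 * (φD + g) := by
      rw [hk]
      linear_combination ((max (1 / Real.sqrt (2 * μ)) (Real.sqrt (2 * μ))) * C₂ ^ 2 * L𝕄 * (φD + g) * C₁ * Lℓ) * hMM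
    linarith [this ▸ hsmall]
  have hKlt : k.toNNReal < 1 := by
    rw [← Real.toNNReal_one]
    exact (Real.toNNReal_lt_toNNReal_iff_of_nonneg hk0).2 hk1
  have hlip : LipschitzWith k.toNNReal A := by
    apply LipschitzWith.of_dist_le_mul
    intro x y
    rw [dist_eq_norm, dist_eq_norm, Real.coe_toNNReal _ hk0]
    exact hAlip x y
  have hcontr : ContractingWith k.toNNReal A := ⟨hKlt, hlip⟩
  have : Nonempty Z := ⟨0⟩
  refine ⟨⟨hcontr.fixedPoint A, hcontr.fixedPoint_isFixedPt, ?_⟩, ?_⟩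
  · intro y hy
    exact (hcontr.fixedPoint_unique hy).symm ▸ rfl
  · intro φ hφ
    calc ‖φ‖ = ‖A φ‖ := by rw [hφ]
    _ ≤ Real.sqrt M * C₂ * (φD + g) := hrange φ
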